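/- For 0 < s ≤ t and a counting-type pair (N(s), N(t)) with N(s) ≤ N(t), and (X_j) i.i.d. square-integrable and independent of (N(s), N(t)), the covariance of the compound sums satisfies Cov[∑_{j=1}^{N(s)} X_j, ∑_{i=1}^{N(t)} X_i] = Var[X_1]·E[N(s)] + (E[X_1])²·Cov[N(s), N(t)]. -/

import Mathlib

open MeasureTheory ProbabilityTheory

section Aux
variable {Ω : Type*} [MeasureSpace Ω] [IsProbabilityMeasure (ℙ : Measure Ω)]

lemma aux_integrable_mul {f g : Ω → ℝ} (hf : MemLp f 2 (ℙ : Measure Ω))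
    (hg : MemLp g 2 (ℙ : Measure Ω)) :
    Integrable (fun ω => f ω * g ω) (ℙ : Measure Ω) := by
  have hint : Integrable (fun ω => (f ω ^ 2 + g ω ^ 2) / 2) (ℙ : Measure Ω) :=
    (hf.integrable_sq.add hg.integrable_sq).div_const 2
  refine hint.mono' (hf.aestronglyMeasurable.mul hg.aestronglyMeasurable) ?_
  filter_upwards with ω
  rw [Real.norm_eq_abs, abs_mul]
  nlinarith [sq_nonneg (|f ω| - |g ω|), abs_nonneg (f ω), abs_nonneg (g ω),
    sq_abs (f ω), sq_abs (g ω)]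

lemma aux_summable_weight {ι : Type*} [Countable ι] [MeasurableSpace ι]
    [MeasurableSingletonClass ι]
    (Y : Ω → ι) (hY : Measurable Y) (w : ι → ℝ) (hw : ∀ i, 0 ≤ w i)
    (hint : Integrable (fun ω => w (Y ω)) (ℙ : Measure Ω)) :
    Summable fun i => (ℙ (Y ⁻¹' {i})).toReal * w i := by
  classical
  refine summable_of_sum_le (c := ∫ ω, w (Y ω))
    (fun i => mul_nonneg ENNReal.toReal_nonneg (hw i)) (fun F => ?_)
  have h1 : ∀ i, (ℙ (Y ⁻¹' {i})).toReal * w i = ∫ ω, (if Y ω = i then w i else 0) := by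
    intro i
    have : (fun ω => if Y ω = i then w i else 0)
        = (Y ⁻¹' {i}).indicator (fun _ => w i) := by
      funext ω; simp [Set.indicator_apply, Set.mem_preimage]
    rw [this, integral_indicator_const _ (hY (measurableSet_singleton i)), smul_eq_mul]
    rfl
  have hinti : ∀ i : ι, Integrable (fun ω => if Y ω = i then w i else 0) (ℙ : Measure Ω) := by
    intro i
    have : (fun ω => if Y ω = i then w i else 0)
        = (Y ⁻¹' {i}).indicator (fun _ => w i) := by
      funext ω; simp [Set.indicator_apply, Set.mem_preimage]
    rw [this]
    exact (integrable_const _).indicator (hY (measurableSet_singleton i))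
  calc ∑ i ∈ F, (ℙ (Y ⁻¹' {i})).toReal * w i
      = ∫ ω, ∑ i ∈ F, (if Y ω = i then w i else 0) := by
        rw [integral_finset_sum _ (fun i _ => hinti i)]
        exact Finset.sum_congr rfl fun i _ => h1 i
    _ ≤ ∫ ω, w (Y ω) := by
        refine integral_mono (integrable_finset_sum _ (fun i _ => hinti i)) hint ?_
        intro ω
        show (∑ i ∈ F, if Y ω = i then w i else 0) ≤ w (Y ω)
        rw [Finset.sum_ite_eq F (Y ω) w]
        split
        · exact le_refl _
        · exact hw _

lemma aux_key {ι : Type*} [Countable ι] [MeasurableSpace ι] [MeasurableSingletonClass ι]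
    [DecidableEq ι] (Y : Ω → ι) (hY : Measurable Y) (Φ : ι → Ω → ℝ)
    (hΦint : ∀ i, Integrable (Φ i) (ℙ : Measure Ω))
    (hind : ∀ i, IndepFun (fun ω => if Y ω = i then (1:ℝ) else 0) (Φ i) (ℙ : Measure Ω))
    (B : ι → ℝ) (hB : ∀ i, (∫ ω, |Φ i ω|) ≤ B i)
    (hBsum : Summable fun i => (ℙ (Y ⁻¹' {i})).toReal * B i) :
    (∫ ω, Φ (Y ω) ω) = ∑' i, (ℙ (Y ⁻¹' {i})).toReal * ∫ ω, Φ i ω := by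
  set f : ι → Ω → ℝ := fun i ω => (if Y ω = i then (1:ℝ) else 0) * Φ i ω with hfdef
  have hIeq : ∀ i, (fun ω => if Y ω = i then (1:ℝ) else 0)
      = (Y ⁻¹' {i}).indicator (fun _ => (1:ℝ)) := by
    intro i; funext ω
    by_cases h : Y ω = i <;> simp [Set.indicator_apply, h]
  have hImeas : ∀ i, Measurable (fun ω => if Y ω = i then (1:ℝ) else 0) := by
    intro i; rw [hIeq i]
    exact measurable_const.indicator (hY (measurableSet_singleton i))
  have hIint : ∀ i, Integrable (fun ω => if Y ω = i then (1:ℝ) else 0) (ℙ : Measure Ω) := by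
    intro i; rw [hIeq i]
    exact (integrable_const _).indicator (hY (measurableSet_singleton i))
  have hIval : ∀ i, (∫ ω, (if Y ω = i then (1:ℝ) else 0)) = (ℙ (Y ⁻¹' {i})).toReal := by
    intro i; rw [hIeq i, integral_indicator_const _ (hY (measurableSet_singleton i)),
      smul_eq_mul, mul_one]
    rfl
  have hfint : ∀ i, Integrable (f i) (ℙ : Measure Ω) := by
    intro i
    refine (hΦint i).abs.mono'
      (((hImeas i).aestronglyMeasurable).mul (hΦint i).1) ?_
    filter_upwards with ω
    rw [Real.norm_eq_abs, hfdef]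
    simp only []
    rw [abs_mul]
    split
    · simp
    · simp [abs_nonneg]
  have hint_mul : ∀ i, (∫ ω, f i ω) = (ℙ (Y ⁻¹' {i})).toReal * ∫ ω, Φ i ω := by
    intro i
    have h := (hind i).integral_mul_eq_mul_integral (hIint i).1 (hΦint i).1
    have h2 : (∫ ω, f i ω)
        = ∫ ω, ((fun ω => if Y ω = i then (1:ℝ) else 0) * Φ i) ω := rfl
    rw [h2, h, hIval i]
  have habs : ∀ i, (∫ ω, |f i ω|) = (ℙ (Y ⁻¹' {i})).toReal * ∫ ω, |Φ i ω| := by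
    intro i
    have hind' : IndepFun (fun ω => if Y ω = i then (1:ℝ) else 0)
        (fun ω => |Φ i ω|) (ℙ : Measure Ω) := by
      have := (hind i).comp (measurable_id (α := ℝ)) measurable_abs
      exact this
    have h := hind'.integral_mul_eq_mul_integral (hIint i).1 (hΦint i).abs.1
    have h2 : (∫ ω, |f i ω|)
        = ∫ ω, ((fun ω => if Y ω = i then (1:ℝ) else 0) * fun ω => |Φ i ω|) ω := by
      congr 1; funext ω
      simp only [hfdef, Pi.mul_apply, abs_mul]
      congr 1
      split <;> simp
    rw [h2, h, hIval i]
  have hnorm_sum : Summable (fun i => ∫ ω, |f i ω|) := by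
    refine Summable.of_nonneg_of_le (fun i => integral_nonneg (fun ω => abs_nonneg _))
      (fun i => ?_) hBsum
    rw [habs i]
    exact mul_le_mul_of_nonneg_left (hB i) ENNReal.toReal_nonneg
  have hlint : ∑' i, ∫⁻ ω, ‖f i ω‖₊ ∂(ℙ : Measure Ω) ≠ ⊤ := by
    have heq : ∀ i, ∫⁻ ω, ‖f i ω‖₊ ∂(ℙ : Measure Ω) = ENNReal.ofReal (∫ ω, |f i ω|) := by
      intro i
      refine (ofReal_integral_norm_eq_lintegral_enorm (hfint i)).symm.trans ?_
      rfl
    rw [tsum_congr heq, ← ENNReal.ofReal_tsum_of_nonneg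
      (fun i => integral_nonneg fun ω => abs_nonneg _) hnorm_sum]
    exact ENNReal.ofReal_ne_top
  have hpt : ∀ ω, Φ (Y ω) ω = ∑' i, f i ω := by
    intro ω
    have h0 : ∀ b, b ≠ Y ω → f b ω = 0 := by
      intro b hb
      have hb' : ¬ (Y ω = b) := fun h => hb h.symm
      simp [hfdef, hb']
    rw [tsum_eq_single (Y ω) h0]
    simp [hfdef]
  calc (∫ ω, Φ (Y ω) ω) = ∫ ω, ∑' i, f i ω :=
        integral_congr_ae (Filter.Eventually.of_forall hpt)
    _ = ∑' i, ∫ ω, f i ω := integral_tsum (fun i => (hfint i).1) hlint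
    _ = ∑' i, (ℙ (Y ⁻¹' {i})).toReal * ∫ ω, Φ i ω := tsum_congr hint_mul

lemma aux_nat_min_le_mul (a b : ℕ) : min a b ≤ a * b := by
  cases b with
  | zero => simp
  | succ n => exact (Nat.min_le_left _ _).trans (Nat.le_mul_of_pos_right a (Nat.succ_pos n))

lemma aux_range_inter (m n : ℕ) :
    Finset.range m ∩ Finset.range n = Finset.range (min m n) := by
  ext a; simp [Nat.lt_min]

end Aux


/-- Covariance of compound sums: for `N(s) ≤ N(t)` and i.i.d. square-integrable `(X j)`
independent of the pair `(N(s), N(t))`,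
`Cov[∑_{j=1}^{N(s)} X_j, ∑_{i=1}^{N(t)} X_i] = Var[X_1]·E[N(s)] + (E[X_1])²·Cov[N(s), N(t)]`. -/
theorem stmt_5 {Ω : Type*} [MeasureSpace Ω] [IsProbabilityMeasure (ℙ : Measure Ω)]
    (Ns Nt : Ω → ℕ) (X : ℕ → Ω → ℝ)
    (hNs : Measurable Ns) (hNt : Measurable Nt)
    (hle : ∀ᵐ ω ∂(ℙ : Measure Ω), Ns ω ≤ Nt ω)
    (hNsL2 : MemLp (fun ω => (Ns ω : ℝ)) 2 (ℙ : Measure Ω))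
    (hNtL2 : MemLp (fun ω => (Nt ω : ℝ)) 2 (ℙ : Measure Ω))
    (hX : ∀ j, Measurable (X j))
    (hXL2 : MemLp (X 0) 2 (ℙ : Measure Ω))
    (hiid : ∀ j, IdentDistrib (X j) (X 0) (ℙ : Measure Ω) (ℙ : Measure Ω))
    (hindep : iIndepFun X (ℙ : Measure Ω))
    (hNindep : IndepFun (fun ω => (Ns ω, Nt ω)) (fun ω => fun j => X j ω) (ℙ : Measure Ω))
    (Cs Ct : Ω → ℝ)
    (hCs : ∀ ω, Cs ω = ∑ j ∈ Finset.range (Ns ω), X j ω)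
    (hCt : ∀ ω, Ct ω = ∑ i ∈ Finset.range (Nt ω), X i ω) :
    (∫ ω, Cs ω * Ct ω) - (∫ ω, Cs ω) * (∫ ω, Ct ω) =
      variance (X 0) (ℙ : Measure Ω) * (∫ ω, (Ns ω : ℝ))
        + (∫ ω, X 0 ω) ^ 2 *
          ((∫ ω, (Ns ω : ℝ) * (Nt ω : ℝ)) - (∫ ω, (Ns ω : ℝ)) * ∫ ω, (Nt ω : ℝ)) := by
  have hXL2' : ∀ j, MemLp (X j) 2 (ℙ : Measure Ω) := fun j => (hiid j).memLp_iff.mpr hXL2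
  have hXint : ∀ j, Integrable (X j) (ℙ : Measure Ω) := fun j => (hXL2' j).integrable one_le_two
  set μX := ∫ ω, X 0 ω with hμX
  set τ := ∫ ω, X 0 ω * X 0 ω with hτdef
  set v := variance (X 0) (ℙ : Measure Ω) with hvdef
  have hEX : ∀ j, (∫ ω, X j ω) = μX := fun j => (hiid j).integral_eq
  have hEXsq : ∀ j, (∫ ω, X j ω * X j ω) = τ := fun j =>
    ((hiid j).comp (measurable_id.mul measurable_id)).integral_eq
  have hprodInt : ∀ j i, Integrable (fun ω => X j ω * X i ω) (ℙ : Measure Ω) :=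
    fun j i => aux_integrable_mul (hXL2' j) (hXL2' i)
  have hEXX : ∀ j i, j ≠ i → (∫ ω, X j ω * X i ω) = μX * μX := by
    intro j i hne
    have h := (hindep.indepFun hne).integral_mul_eq_mul_integral (hXint j).1 (hXint i).1
    calc (∫ ω, X j ω * X i ω) = ∫ ω, (X j * X i) ω := rfl
      _ = (∫ ω, X j ω) * ∫ ω, X i ω := h
      _ = μX * μX := by rw [hEX j, hEX i]
  set S : ℕ → Ω → ℝ := fun m ω => ∑ j ∈ Finset.range m, X j ω with hSdef
  have hSL2 : ∀ m, MemLp (S m) 2 (ℙ : Measure Ω) :=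
    fun m => memLp_finset_sum _ (fun j _ => hXL2' j)
  have hSmul_int : ∀ m n, Integrable (fun ω => S m ω * S n ω) (ℙ : Measure Ω) :=
    fun m n => aux_integrable_mul (hSL2 m) (hSL2 n)
  have hvar : v = τ - μX ^ 2 := by
    have h2 : (∫ ω, (X 0 ^ 2) ω) = τ := by
      rw [hτdef]
      apply integral_congr_ae
      filter_upwards with ω
      simp [pow_two]
    rw [hvdef, variance_eq_sub hXL2, h2, hμX]
  set g : ℕ × ℕ → ℝ :=
    fun p => ((min p.1 p.2 : ℕ) : ℝ) * v + ((p.1 : ℝ) * (p.2 : ℝ)) * μX ^ 2 with hgdef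
  have hSS_expand : ∀ m n (ω : Ω), S m ω * S n ω
      = ∑ j ∈ Finset.range m, ∑ i ∈ Finset.range n, X j ω * X i ω := by
    intro m n ω
    exact Finset.sum_mul_sum _ _ _ _
  have hESS : ∀ m n, (∫ ω, S m ω * S n ω) = g (m, n) := by
    intro m n
    have h1 : (∫ ω, S m ω * S n ω)
        = ∑ j ∈ Finset.range m, ∑ i ∈ Finset.range n, ∫ ω, X j ω * X i ω := by
      rw [integral_congr_ae (Filter.Eventually.of_forall fun ω => hSS_expand m n ω),
        integral_finset_sum _ (fun j _ => integrable_finset_sum _ (fun i _ => hprodInt j i))]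
      exact Finset.sum_congr rfl fun j _ => integral_finset_sum _ fun i _ => hprodInt j i
    rw [h1]
    have h2 : ∀ j ∈ Finset.range m, ∀ i ∈ Finset.range n,
        (∫ ω, X j ω * X i ω) = μX ^ 2 + (if j = i then τ - μX ^ 2 else 0) := by
      intro j _ i _
      by_cases h : j = i
      · subst h; rw [hEXsq j, if_pos rfl]; ring
      · rw [hEXX j i h, if_neg h]; ring
    rw [Finset.sum_congr rfl (fun j hj => Finset.sum_congr rfl (fun i hi => h2 j hj i hi))]
    have h3 : ∀ j, (∑ i ∈ Finset.range n, (μX ^ 2 + if j = i then τ - μX ^ 2 else 0))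
        = (n : ℝ) * μX ^ 2 + (if j ∈ Finset.range n then τ - μX ^ 2 else 0) := by
      intro j
      rw [Finset.sum_add_distrib, Finset.sum_const, Finset.sum_ite_eq, nsmul_eq_mul,
        Finset.card_range]
    rw [Finset.sum_congr rfl fun j _ => h3 j, Finset.sum_add_distrib, Finset.sum_const,
      Finset.sum_ite_mem, aux_range_inter, Finset.sum_const, nsmul_eq_mul, nsmul_eq_mul,
      Finset.card_range, Finset.card_range, hgdef, hvar]
    push_cast
    ring
  have hτ0 : 0 ≤ τ := by
    rw [hτdef]; exact integral_nonneg fun ω => mul_self_nonneg _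
  have hXabs : ∀ j i, (∫ ω, |X j ω * X i ω|) ≤ τ := by
    intro j i
    have hpt : ∀ ω, |X j ω * X i ω| ≤ (X j ω * X j ω + X i ω * X i ω) / 2 := by
      intro ω
      rw [abs_mul]
      nlinarith [sq_nonneg (|X j ω| - |X i ω|), abs_nonneg (X j ω), abs_nonneg (X i ω),
        abs_mul_abs_self (X j ω), abs_mul_abs_self (X i ω)]
    calc (∫ ω, |X j ω * X i ω|)
        ≤ ∫ ω, (X j ω * X j ω + X i ω * X i ω) / 2 :=
          integral_mono (hprodInt j i).abs
            (((hprodInt j j).add (hprodInt i i)).div_const 2) hpt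
      _ = (τ + τ) / 2 := by
          rw [integral_div, integral_add (hprodInt j j) (hprodInt i i), hEXsq j, hEXsq i]
      _ ≤ τ := by linarith
  have hSabs : ∀ m n, (∫ ω, |S m ω * S n ω|) ≤ ((m : ℝ) * (n : ℝ)) * τ := by
    intro m n
    have hpt : ∀ ω, |S m ω * S n ω|
        ≤ ∑ j ∈ Finset.range m, ∑ i ∈ Finset.range n, |X j ω * X i ω| := by
      intro ω
      rw [hSS_expand m n ω]
      calc |∑ j ∈ Finset.range m, ∑ i ∈ Finset.range n, X j ω * X i ω|
          ≤ ∑ j ∈ Finset.range m, |∑ i ∈ Finset.range n, X j ω * X i ω| :=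
            Finset.abs_sum_le_sum_abs _ _
        _ ≤ _ := Finset.sum_le_sum fun j _ => Finset.abs_sum_le_sum_abs _ _
    calc (∫ ω, |S m ω * S n ω|)
        ≤ ∫ ω, ∑ j ∈ Finset.range m, ∑ i ∈ Finset.range n, |X j ω * X i ω| :=
          integral_mono (hSmul_int m n).abs
            (integrable_finset_sum _ fun j _ =>
              integrable_finset_sum _ fun i _ => (hprodInt j i).abs) hpt
      _ = ∑ j ∈ Finset.range m, ∑ i ∈ Finset.range n, ∫ ω, |X j ω * X i ω| := by
          rw [integral_finset_sum _ (fun j _ =>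
            integrable_finset_sum _ fun i _ => (hprodInt j i).abs)]
          exact Finset.sum_congr rfl fun j _ =>
            integral_finset_sum _ fun i _ => (hprodInt j i).abs
      _ ≤ ∑ j ∈ Finset.range m, ∑ i ∈ Finset.range n, τ :=
          Finset.sum_le_sum fun j _ => Finset.sum_le_sum fun i _ => hXabs j i
      _ = ((m : ℝ) * (n : ℝ)) * τ := by
          simp [Finset.sum_const, Finset.card_range, nsmul_eq_mul]; ring
  set Y : Ω → ℕ × ℕ := fun ω => (Ns ω, Nt ω) with hYdef
  have hYmeas : Measurable Y := hNs.prodMk hNt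
  have hNN_int : Integrable (fun ω => (Ns ω : ℝ) * (Nt ω : ℝ)) (ℙ : Measure Ω) :=
    aux_integrable_mul hNsL2 hNtL2
  have hWsum : Summable fun p : ℕ × ℕ =>
      (ℙ (Y ⁻¹' {p})).toReal * ((p.1 : ℝ) * (p.2 : ℝ)) := by
    refine aux_summable_weight Y hYmeas _ (fun p => by positivity) ?_
    exact hNN_int
  have hindY : ∀ (p : ℕ × ℕ) (ψ : (ℕ → ℝ) → ℝ), Measurable ψ →
      IndepFun (fun ω => if Y ω = p then (1:ℝ) else 0)
        (fun ω => ψ (fun j => X j ω)) (ℙ : Measure Ω) := by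
    intro p ψ hψ
    exact hNindep.comp (measurable_of_countable fun q => if q = p then (1:ℝ) else 0) hψ
  have hKey1 := aux_key Y hYmeas (fun p ω => S p.1 ω * S p.2 ω)
      (fun p => hSmul_int p.1 p.2)
      (fun p => hindY p
        (fun x => (∑ j ∈ Finset.range p.1, x j) * ∑ i ∈ Finset.range p.2, x i)
        ((Finset.measurable_sum _ fun j _ => measurable_pi_apply j).mul
          (Finset.measurable_sum _ fun i _ => measurable_pi_apply i)))
      (fun p => ((p.1 : ℝ) * (p.2 : ℝ)) * τ) (fun p => hSabs p.1 p.2)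
      (by simpa [mul_assoc] using hWsum.mul_right τ)
  have hg_bound : ∀ p : ℕ × ℕ, |g p| ≤ ((p.1 : ℝ) * (p.2 : ℝ)) * (|v| + μX ^ 2) := by
    intro p
    have hmin : ((min p.1 p.2 : ℕ) : ℝ) ≤ (p.1 : ℝ) * (p.2 : ℝ) := by
      exact_mod_cast aux_nat_min_le_mul p.1 p.2
    have h1 : |((min p.1 p.2 : ℕ) : ℝ) * v| = ((min p.1 p.2 : ℕ) : ℝ) * |v| := by
      rw [abs_mul, abs_of_nonneg (by positivity : (0:ℝ) ≤ ((min p.1 p.2 : ℕ) : ℝ))]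
    have h2 : |((p.1 : ℝ) * (p.2 : ℝ)) * μX ^ 2| = ((p.1 : ℝ) * (p.2 : ℝ)) * μX ^ 2 := by
      rw [abs_of_nonneg (by positivity)]
    calc |g p| ≤ |((min p.1 p.2 : ℕ) : ℝ) * v| + |((p.1 : ℝ) * (p.2 : ℝ)) * μX ^ 2| :=
          abs_add_le _ _
      _ = ((min p.1 p.2 : ℕ) : ℝ) * |v| + ((p.1 : ℝ) * (p.2 : ℝ)) * μX ^ 2 := by
          rw [h1, h2]
      _ ≤ ((p.1 : ℝ) * (p.2 : ℝ)) * |v| + ((p.1 : ℝ) * (p.2 : ℝ)) * μX ^ 2 :=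
          add_le_add_left (mul_le_mul_of_nonneg_right hmin (abs_nonneg v)) _
      _ = ((p.1 : ℝ) * (p.2 : ℝ)) * (|v| + μX ^ 2) := by ring
  have hKey2 := aux_key Y hYmeas (fun p _ => g p)
      (fun p => integrable_const _)
      (fun p => hindY p (fun _ => g p) measurable_const)
      (fun p => |g p|)
      (fun p => by rw [integral_const]; simp)
      (by
        refine Summable.of_nonneg_of_le
          (fun p => mul_nonneg ENNReal.toReal_nonneg (abs_nonneg _))
          (fun p => ?_) (by simpa [mul_assoc] using hWsum.mul_right (|v| + μX ^ 2))
        exact mul_le_mul_of_nonneg_left ((hg_bound p).trans_eq (by ring))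
          ENNReal.toReal_nonneg)
  have hCsCt : (∫ ω, Cs ω * Ct ω) = ∫ ω, g (Y ω) := by
    calc (∫ ω, Cs ω * Ct ω) = ∫ ω, S (Y ω).1 ω * S (Y ω).2 ω := by
          apply integral_congr_ae
          filter_upwards with ω
          rw [hCs ω, hCt ω]
      _ = ∑' p : ℕ × ℕ, (ℙ (Y ⁻¹' {p})).toReal * ∫ ω, S p.1 ω * S p.2 ω := hKey1
      _ = ∑' p : ℕ × ℕ, (ℙ (Y ⁻¹' {p})).toReal * ∫ (_ : Ω), g p := by
          refine tsum_congr fun p => ?_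
          rw [hESS p.1 p.2, integral_const]
          simp
      _ = ∫ ω, g (Y ω) := hKey2.symm
  have hmin_meas : Measurable fun ω => ((min (Ns ω) (Nt ω) : ℕ) : ℝ) :=
    (measurable_of_countable _).comp (hNs.min hNt)
  have hNs_int : Integrable (fun ω => (Ns ω : ℝ)) (ℙ : Measure Ω) :=
    hNsL2.integrable one_le_two
  have hNt_int : Integrable (fun ω => (Nt ω : ℝ)) (ℙ : Measure Ω) :=
    hNtL2.integrable one_le_two
  have hmin_int : Integrable (fun ω => ((min (Ns ω) (Nt ω) : ℕ) : ℝ)) (ℙ : Measure Ω) := by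
    refine hNs_int.mono' hmin_meas.aestronglyMeasurable ?_
    filter_upwards with ω
    rw [Real.norm_eq_abs, abs_of_nonneg (by positivity)]
    exact_mod_cast min_le_left (Ns ω) (Nt ω)
  have hmin_eq : (∫ ω, ((min (Ns ω) (Nt ω) : ℕ) : ℝ)) = ∫ ω, (Ns ω : ℝ) := by
    apply integral_congr_ae
    filter_upwards [hle] with ω h
    rw [min_eq_left h]
  have hIg : (∫ ω, g (Y ω))
      = v * (∫ ω, (Ns ω : ℝ)) + μX ^ 2 * ∫ ω, (Ns ω : ℝ) * (Nt ω : ℝ) := by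
    have heq : (fun ω => g (Y ω)) = fun ω =>
        ((min (Ns ω) (Nt ω) : ℕ) : ℝ) * v + ((Ns ω : ℝ) * (Nt ω : ℝ)) * μX ^ 2 := rfl
    rw [heq, integral_add (hmin_int.mul_const v) (hNN_int.mul_const _),
      integral_mul_const, integral_mul_const, hmin_eq]
    ring
  -- Wald's identity for Cs and Ct
  set κ := ∫ ω, |X 0 ω| with hκdef
  have hEabsX : ∀ j, (∫ ω, |X j ω|) = κ := fun j =>
    ((hiid j).comp measurable_norm).integral_eq
  have hSabs1 : ∀ m, (∫ ω, |S m ω|) ≤ (m : ℝ) * κ := by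
    intro m
    have hpt : ∀ ω, |S m ω| ≤ ∑ j ∈ Finset.range m, |X j ω| :=
      fun ω => Finset.abs_sum_le_sum_abs _ _
    calc (∫ ω, |S m ω|) ≤ ∫ ω, ∑ j ∈ Finset.range m, |X j ω| :=
          integral_mono ((hSL2 m).integrable one_le_two).abs
            (integrable_finset_sum _ fun j _ => (hXint j).abs) hpt
      _ = ∑ j ∈ Finset.range m, ∫ ω, |X j ω| :=
          integral_finset_sum _ fun j _ => (hXint j).abs
      _ = (m : ℝ) * κ := by
          rw [Finset.sum_congr rfl fun j _ => hEabsX j]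
          simp [Finset.sum_const, Finset.card_range, nsmul_eq_mul]
  have hES : ∀ m, (∫ ω, S m ω) = (m : ℝ) * μX := by
    intro m
    show (∫ ω, ∑ j ∈ Finset.range m, X j ω) = _
    rw [integral_finset_sum _ fun j _ => hXint j, Finset.sum_congr rfl fun j _ => hEX j]
    simp [Finset.sum_const, Finset.card_range, nsmul_eq_mul]
  have hwald : ∀ (N : Ω → ℕ), Measurable N →
      Integrable (fun ω => (N ω : ℝ)) (ℙ : Measure Ω) →
      (∀ (m : ℕ) (ψ : (ℕ → ℝ) → ℝ), Measurable ψ →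
        IndepFun (fun ω => if N ω = m then (1:ℝ) else 0)
          (fun ω => ψ (fun j => X j ω)) (ℙ : Measure Ω)) →
      (∫ ω, S (N ω) ω) = μX * ∫ ω, (N ω : ℝ) := by
    intro N hN hNint hindN
    have hwsum : Summable fun m : ℕ => (ℙ (N ⁻¹' {m})).toReal * (m : ℝ) :=
      aux_summable_weight N hN (fun m => (m : ℝ)) (fun m => Nat.cast_nonneg m) hNint
    have hK := aux_key N hN (fun m ω => S m ω) (fun m => (hSL2 m).integrable one_le_two)
        (fun m => hindN m (fun x => ∑ j ∈ Finset.range m, x j)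
          (Finset.measurable_sum _ fun j _ => measurable_pi_apply j))
        (fun m => (m : ℝ) * κ) hSabs1 (by simpa [mul_assoc] using hwsum.mul_right κ)
    have hK' := aux_key N hN (fun m _ => (m : ℝ)) (fun m => integrable_const _)
        (fun m => hindN m (fun _ => (m : ℝ)) measurable_const)
        (fun m => (m : ℝ))
        (fun m => by rw [integral_const]; simp [Nat.abs_cast])
        hwsum
    have hN_id : (∫ ω, (N ω : ℝ)) = ∑' m, (ℙ (N ⁻¹' {m})).toReal * (m : ℝ) := by
      rw [hK']
      exact tsum_congr fun m => by rw [integral_const]; simp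
    calc (∫ ω, S (N ω) ω) = ∑' m, (ℙ (N ⁻¹' {m})).toReal * ∫ ω, S m ω := hK
      _ = ∑' m, ((ℙ (N ⁻¹' {m})).toReal * (m : ℝ)) * μX := by
          refine tsum_congr fun m => ?_
          rw [hES m]; ring
      _ = (∑' m, (ℙ (N ⁻¹' {m})).toReal * (m : ℝ)) * μX := tsum_mul_right
      _ = μX * ∫ ω, (N ω : ℝ) := by rw [← hN_id, mul_comm]
  have hECs : (∫ ω, Cs ω) = μX * ∫ ω, (Ns ω : ℝ) := by
    have h1 : (∫ ω, Cs ω) = ∫ ω, S (Ns ω) ω := by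
      apply integral_congr_ae
      filter_upwards with ω
      rw [hCs ω]
    rw [h1]
    refine hwald Ns hNs hNs_int (fun m ψ hψ => ?_)
    exact hNindep.comp
      (measurable_of_countable fun q : ℕ × ℕ => if q.1 = m then (1:ℝ) else 0) hψ
  have hECt : (∫ ω, Ct ω) = μX * ∫ ω, (Nt ω : ℝ) := by
    have h1 : (∫ ω, Ct ω) = ∫ ω, S (Nt ω) ω := by
      apply integral_congr_ae
      filter_upwards with ω
      rw [hCt ω]
    rw [h1]
    refine hwald Nt hNt hNt_int (fun m ψ hψ => ?_)
    exact hNindep.comp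
      (measurable_of_countable fun q : ℕ × ℕ => if q.2 = m then (1:ℝ) else 0) hψ
  rw [hCsCt, hIg, hECs, hECt]
  ring
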